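/- Fix p ∈ (0,1) and set K = (1 + (1−p)·p^{p/(1−p)})^{-1}. Define, for z ∈ [0,1], g₀(z) = z·log₂(1/K) + (1−z)·[(1−p)·log₂((1−p)/(1−K)) + p·log₂(p/K)], g₁(z) = z·[p·log₂(p/K) + (1−p)·log₂((1−p)/(1−K))] + (1−z)·log₂(1/K), F₀(z) = z + (1−p)(1−z), F₁(z) = p·z, and h(z) = z·log₂(p(1−K)/((1−p)K)) + (1−z)·log₂(p)/(1−p). Then for every z ∈ [0,1], log₂(1/K) + h(z) = g₀(z) + h(F₀(z)) = g₁(z) + h(F₁(z)). In particular, ρ = log₂(1/K) = log₂(1 + (1−p)·p^{p/(1−p)}) and h solve the Bellman equation for the POST channel dynamic program. -/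

import Mathlib

open Real

/-- Verification of the Bellman equation for the POST channel
dynamic program: with `K = (1 + (1−p)p^{p/(1−p)})⁻¹`, the value
`ρ = log₂(1/K)` and relative-value function `h` satisfy
`ρ + h(z) = g₀(z) + h(F₀(z)) = g₁(z) + h(F₁(z))` for all `z ∈ [0,1]`. -/
theorem POST_bellman_verification
    (p K : ℝ) (hp : p ∈ Set.Ioo (0:ℝ) 1)
    (hK : K = (1 + (1 - p) * p ^ (p / (1 - p)))⁻¹)
    (g₀ g₁ F₀ F₁ h : ℝ → ℝ)
    (hg₀ : ∀ z, g₀ z = z * Real.logb 2 (1 / K)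
      + (1 - z) * ((1 - p) * Real.logb 2 ((1 - p) / (1 - K))
                   + p * Real.logb 2 (p / K)))
    (hg₁ : ∀ z, g₁ z = z * (p * Real.logb 2 (p / K)
                   + (1 - p) * Real.logb 2 ((1 - p) / (1 - K)))
      + (1 - z) * Real.logb 2 (1 / K))
    (hF₀ : ∀ z, F₀ z = z + (1 - p) * (1 - z))
    (hF₁ : ∀ z, F₁ z = p * z)
    (hh : ∀ z, h z = z * Real.logb 2 (p * (1 - K) / ((1 - p) * K))
      + (1 - z) * Real.logb 2 p / (1 - p)) :
    ∀ z ∈ Set.Icc (0:ℝ) 1,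
      Real.logb 2 (1 / K) + h z = g₀ z + h (F₀ z) ∧
      Real.logb 2 (1 / K) + h z = g₁ z + h (F₁ z) := by
  obtain ⟨hp0, hp1⟩ := hp
  have h1p : (0:ℝ) < 1 - p := by linarith
  set α := p / (1 - p) with hα
  have hpow : 0 < p ^ α := Real.rpow_pos_of_pos hp0 α
  have hD : (0:ℝ) < 1 + (1 - p) * p ^ α := by nlinarith [mul_pos h1p hpow]
  have hK0 : 0 < K := by rw [hK]; exact inv_pos.mpr hD
  have hK1 : K < 1 := by
    rw [hK]
    have : (1:ℝ) < 1 + (1 - p) * p ^ α := by nlinarith [mul_pos h1p hpow]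
    exact inv_lt_one_of_one_lt₀ this
  have h1K : (0:ℝ) < 1 - K := by linarith
  have hkey : 1 - K = (1 - p) * p ^ α * K := by
    rw [hK]; field_simp; ring
  have hlogpow : Real.logb 2 (p ^ α) = α * Real.logb 2 p := by
    rw [Real.logb, Real.logb, Real.log_rpow hp0]; ring
  have e1 : Real.logb 2 (1 / K) = -Real.logb 2 K := by
    rw [one_div, Real.logb_inv]
  have e2 : Real.logb 2 ((1 - p) / (1 - K)) = -(α * Real.logb 2 p + Real.logb 2 K) := by
    rw [hkey, Real.logb_div h1p.ne' (by positivity),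
      Real.logb_mul (by positivity) hK0.ne', Real.logb_mul h1p.ne' hpow.ne', hlogpow]
    ring
  have e3 : Real.logb 2 (p / K) = Real.logb 2 p - Real.logb 2 K :=
    Real.logb_div hp0.ne' hK0.ne'
  have e4 : Real.logb 2 (p * (1 - K) / ((1 - p) * K))
      = Real.logb 2 p + α * Real.logb 2 p := by
    have hq : p * (1 - K) / ((1 - p) * K) = p * p ^ α := by
      rw [hkey]; field_simp
    rw [hq, Real.logb_mul hp0.ne' hpow.ne', hlogpow]
  intro z hz
  constructor
  · rw [hh, hh, hg₀ z, hF₀, e1, e2, e3, e4, hα]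
    field_simp
    ring
  · rw [hh, hh, hg₁ z, hF₁, e1, e2, e3, e4, hα]
    field_simp
    ring
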